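/- Let μ and ν be finite measures on ℝ with ν ≠ 0. Then for ν-almost every x, the ratio (∫ exp(−n·(z − x)²/2) dμ(z)) / (∫ exp(−n·(z − x)²/2) dν(z)) converges, as n → ∞, to (dμ/dν)(x), the Radon–Nikodym derivative of the absolutely continuous part of μ with respect to ν. -/

import Mathlib

open MeasureTheory Filter Set Metric
open scoped ENNReal Topology

lemma ae_closedBall_pos (ν : Measure ℝ) :
    ∀ᵐ x ∂ν, ∀ r : ℝ, 0 < r → 0 < ν (Metric.closedBall x r) := by
  rw [ae_iff]
  apply measure_null_of_locally_null
  intro x hx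
  simp only [Set.mem_setOf_eq, not_forall] at hx
  obtain ⟨r, hr, hz⟩ := hx
  refine ⟨Metric.ball x r, ?_, ?_⟩
  · exact mem_nhdsWithin_of_mem_nhds (Metric.ball_mem_nhds x hr)
  · have : ν (Metric.ball x r) ≤ ν (Metric.closedBall x r) :=
      measure_mono Metric.ball_subset_closedBall
    have h0 : ν (Metric.closedBall x r) = 0 :=
      nonpos_iff_eq_zero.mp (not_lt.mp hz)
    exact le_antisymm (h0 ▸ this) zero_le

lemma kernel_layercake (μ : Measure ℝ) [IsFiniteMeasure μ] (x : ℝ) (n : ℕ) (hn : 1 ≤ n) :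
    ∫⁻ z, ENNReal.ofReal (Real.exp (-((n : ℝ) * (z - x) ^ 2 / 2))) ∂μ
      = ∫⁻ t in Set.Ioc (0:ℝ) 1,
          μ (Metric.closedBall x (Real.sqrt (2 * (-Real.log t) / n))) := by
  have hmble : AEMeasurable (fun z : ℝ => Real.exp (-((n : ℝ) * (z - x) ^ 2 / 2))) μ :=
    (Real.continuous_exp.comp (by continuity)).aemeasurable
  rw [lintegral_eq_lintegral_meas_le μ
    (Filter.Eventually.of_forall fun z => (Real.exp_pos _).le) hmble]
  have hsplit : Set.Ioi (0:ℝ) = Set.Ioc (0:ℝ) 1 ∪ Set.Ioi 1 :=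
    (Set.Ioc_union_Ioi_eq_Ioi zero_le_one).symm
  rw [hsplit, lintegral_union measurableSet_Ioi (Set.Ioc_disjoint_Ioi le_rfl)]
  have h2 : ∫⁻ t in Set.Ioi (1:ℝ),
      μ {z : ℝ | t ≤ Real.exp (-((n : ℝ) * (z - x) ^ 2 / 2))} = 0 := by
    rw [← lintegral_zero (μ := volume.restrict (Set.Ioi (1:ℝ)))]
    apply setLIntegral_congr_fun measurableSet_Ioi
    intro t ht; beta_reduce
    have : {z : ℝ | t ≤ Real.exp (-((n : ℝ) * (z - x) ^ 2 / 2))} = ∅ := by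
      ext z
      simp only [Set.mem_setOf_eq, Set.mem_empty_iff_false, iff_false, not_le]
      have hn2 : (0:ℝ) ≤ (n : ℝ) * (z - x) ^ 2 / 2 := by positivity
      calc Real.exp (-((n : ℝ) * (z - x) ^ 2 / 2)) ≤ 1 := by
            rw [Real.exp_le_one_iff]; linarith
        _ < t := ht
    rw [this, measure_empty]
  rw [h2, add_zero]
  apply setLIntegral_congr_fun measurableSet_Ioc
  intro t ht; beta_reduce
  congr 1
  ext z
  have hnpos : (0:ℝ) < n := by exact_mod_cast hn
  have hlog : 0 ≤ -Real.log t := by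
    simpa using Real.log_nonpos ht.1.le ht.2
  have hrad : 0 ≤ 2 * (-Real.log t) / n := by positivity
  simp only [Set.mem_setOf_eq, Metric.mem_closedBall, Real.dist_eq]
  rw [← Real.log_le_iff_le_exp ht.1,
    Real.le_sqrt (abs_nonneg _) hrad, sq_abs]
  rw [le_div_iff₀ hnpos]
  constructor <;> intro h <;> nlinarith

lemma rad_pos_le {n : ℕ} (hn : 1 ≤ n) {δ t : ℝ} (hδ : 0 < δ)
    (ht : t ∈ Set.Ioo (Real.exp (-((n : ℝ) * δ ^ 2 / 2))) 1) :
    0 < Real.sqrt (2 * (-Real.log t) / n) ∧ Real.sqrt (2 * (-Real.log t) / n) ≤ δ := by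
  have hnpos : (0:ℝ) < n := by exact_mod_cast hn
  have htpos : 0 < t := lt_trans (Real.exp_pos _) ht.1
  have hlogneg : Real.log t < 0 := Real.log_neg htpos ht.2
  have hloglt : -((n : ℝ) * δ ^ 2 / 2) < Real.log t := by
    rw [← Real.log_exp (-((n : ℝ) * δ ^ 2 / 2))]
    exact Real.log_lt_log (Real.exp_pos _) ht.1
  constructor
  · apply Real.sqrt_pos.2
    have h0 : 0 < -Real.log t := by linarith
    positivity
  · rw [show δ = Real.sqrt (δ ^ 2) from (Real.sqrt_sq hδ.le).symm]
    apply Real.sqrt_le_sqrt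
    rw [div_le_iff₀ hnpos]
    nlinarith

lemma split_layer (ρ : Measure ℝ) [IsFiniteMeasure ρ] (x δ : ℝ) (hδ : 0 < δ)
    (n : ℕ) (hn : 1 ≤ n) :
    ∫⁻ z, ENNReal.ofReal (Real.exp (-((n : ℝ) * (z - x) ^ 2 / 2))) ∂ρ
      = (∫⁻ t in Set.Ioc (0:ℝ) (Real.exp (-((n : ℝ) * δ ^ 2 / 2))),
          ρ (Metric.closedBall x (Real.sqrt (2 * (-Real.log t) / n))))
        + ∫⁻ t in Set.Ioo (Real.exp (-((n : ℝ) * δ ^ 2 / 2))) 1,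
          ρ (Metric.closedBall x (Real.sqrt (2 * (-Real.log t) / n))) := by
  have hc1 : Real.exp (-((n : ℝ) * δ ^ 2 / 2)) ≤ 1 := by
    rw [Real.exp_le_one_iff]
    have : (0:ℝ) ≤ (n : ℝ) * δ ^ 2 / 2 := by positivity
    linarith
  rw [kernel_layercake ρ x n hn,
    ← Set.Ioc_union_Ioc_eq_Ioc (Real.exp_pos (-((n : ℝ) * δ ^ 2 / 2))).le hc1,
    lintegral_union measurableSet_Ioc (Set.Ioc_disjoint_Ioc_of_le le_rfl)]
  congr 1
  exact setLIntegral_congr (Filter.EventuallyEq.symm Ioo_ae_eq_Ioc)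

lemma first_piece_le (ρ : Measure ℝ) [IsFiniteMeasure ρ] (x : ℝ) (c : ℝ) (hc : 0 < c)
    (n : ℕ) :
    (∫⁻ t in Set.Ioc (0:ℝ) c,
        ρ (Metric.closedBall x (Real.sqrt (2 * (-Real.log t) / n))))
      ≤ ρ Set.univ * ENNReal.ofReal c := by
  calc (∫⁻ t in Set.Ioc (0:ℝ) c,
        ρ (Metric.closedBall x (Real.sqrt (2 * (-Real.log t) / n))))
      ≤ ∫⁻ _ in Set.Ioc (0:ℝ) c, ρ Set.univ := by
        exact lintegral_mono fun t => measure_mono (Set.subset_univ _)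
    _ = ρ Set.univ * volume (Set.Ioc (0:ℝ) c) := setLIntegral_const _ _
    _ = ρ Set.univ * ENNReal.ofReal c := by rw [Real.volume_Ioc, sub_zero]


lemma upper_est (μ ν : Measure ℝ) [IsFiniteMeasure μ] [IsFiniteMeasure ν] (x : ℝ)
    {δ : ℝ} (hδ : 0 < δ) {c : ℝ≥0∞} (hc : c ≠ ∞)
    (hcomp : ∀ r : ℝ, 0 < r → r ≤ δ →
      μ (Metric.closedBall x r) ≤ c * ν (Metric.closedBall x r))
    (n : ℕ) (hn : 1 ≤ n) :
    ∫⁻ z, ENNReal.ofReal (Real.exp (-((n : ℝ) * (z - x) ^ 2 / 2))) ∂μ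
      ≤ c * (∫⁻ z, ENNReal.ofReal (Real.exp (-((n : ℝ) * (z - x) ^ 2 / 2))) ∂ν)
        + μ Set.univ * ENNReal.ofReal (Real.exp (-((n : ℝ) * δ ^ 2 / 2))) := by
  have h1 : (∫⁻ t in Set.Ioc (0:ℝ) (Real.exp (-((n : ℝ) * δ ^ 2 / 2))),
        μ (Metric.closedBall x (Real.sqrt (2 * (-Real.log t) / n))))
      ≤ μ Set.univ * ENNReal.ofReal (Real.exp (-((n : ℝ) * δ ^ 2 / 2))) :=
    first_piece_le μ x _ (Real.exp_pos _) n
  have h2 : (∫⁻ t in Set.Ioo (Real.exp (-((n : ℝ) * δ ^ 2 / 2))) 1,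
        μ (Metric.closedBall x (Real.sqrt (2 * (-Real.log t) / n))))
      ≤ c * (∫⁻ z, ENNReal.ofReal (Real.exp (-((n : ℝ) * (z - x) ^ 2 / 2))) ∂ν) := by
    have hstep : (∫⁻ t in Set.Ioo (Real.exp (-((n : ℝ) * δ ^ 2 / 2))) 1,
          μ (Metric.closedBall x (Real.sqrt (2 * (-Real.log t) / n))))
        ≤ ∫⁻ t in Set.Ioo (Real.exp (-((n : ℝ) * δ ^ 2 / 2))) 1,
            c * ν (Metric.closedBall x (Real.sqrt (2 * (-Real.log t) / n))) := by
      apply lintegral_mono_ae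
      rw [ae_restrict_iff' measurableSet_Ioo]
      refine Filter.Eventually.of_forall fun t ht => ?_
      obtain ⟨hr1, hr2⟩ := rad_pos_le hn hδ ht
      exact hcomp _ hr1 hr2
    have hmul : (∫⁻ t in Set.Ioo (Real.exp (-((n : ℝ) * δ ^ 2 / 2))) 1,
          c * ν (Metric.closedBall x (Real.sqrt (2 * (-Real.log t) / n))))
        = c * (∫⁻ t in Set.Ioo (Real.exp (-((n : ℝ) * δ ^ 2 / 2))) 1,
            ν (Metric.closedBall x (Real.sqrt (2 * (-Real.log t) / n)))) :=
      lintegral_const_mul' _ _ hc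
    have hsub : (∫⁻ t in Set.Ioo (Real.exp (-((n : ℝ) * δ ^ 2 / 2))) 1,
          ν (Metric.closedBall x (Real.sqrt (2 * (-Real.log t) / n))))
        ≤ ∫⁻ z, ENNReal.ofReal (Real.exp (-((n : ℝ) * (z - x) ^ 2 / 2))) ∂ν := by
      rw [split_layer ν x δ hδ n hn]
      exact le_add_self
    exact hstep.trans (hmul.le.trans (mul_le_mul_right hsub c))
  calc ∫⁻ z, ENNReal.ofReal (Real.exp (-((n : ℝ) * (z - x) ^ 2 / 2))) ∂μ
      = (∫⁻ t in Set.Ioc (0:ℝ) (Real.exp (-((n : ℝ) * δ ^ 2 / 2))),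
          μ (Metric.closedBall x (Real.sqrt (2 * (-Real.log t) / n))))
        + ∫⁻ t in Set.Ioo (Real.exp (-((n : ℝ) * δ ^ 2 / 2))) 1,
          μ (Metric.closedBall x (Real.sqrt (2 * (-Real.log t) / n))) :=
      split_layer μ x δ hδ n hn
    _ ≤ μ Set.univ * ENNReal.ofReal (Real.exp (-((n : ℝ) * δ ^ 2 / 2)))
        + c * (∫⁻ z, ENNReal.ofReal (Real.exp (-((n : ℝ) * (z - x) ^ 2 / 2))) ∂ν) :=
      add_le_add h1 h2
    _ = _ := add_comm _ _

lemma lower_est (μ ν : Measure ℝ) [IsFiniteMeasure μ] [IsFiniteMeasure ν] (x : ℝ)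
    {δ : ℝ} (hδ : 0 < δ) {c : ℝ≥0∞} (hc : c ≠ ∞)
    (hcomp : ∀ r : ℝ, 0 < r → r ≤ δ →
      c * ν (Metric.closedBall x r) ≤ μ (Metric.closedBall x r))
    (n : ℕ) (hn : 1 ≤ n) :
    c * (∫⁻ z, ENNReal.ofReal (Real.exp (-((n : ℝ) * (z - x) ^ 2 / 2))) ∂ν)
      ≤ (∫⁻ z, ENNReal.ofReal (Real.exp (-((n : ℝ) * (z - x) ^ 2 / 2))) ∂μ)
        + c * (ν Set.univ * ENNReal.ofReal (Real.exp (-((n : ℝ) * δ ^ 2 / 2)))) := by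
  have h1 : c * (∫⁻ t in Set.Ioc (0:ℝ) (Real.exp (-((n : ℝ) * δ ^ 2 / 2))),
        ν (Metric.closedBall x (Real.sqrt (2 * (-Real.log t) / n))))
      ≤ c * (ν Set.univ * ENNReal.ofReal (Real.exp (-((n : ℝ) * δ ^ 2 / 2)))) :=
    mul_le_mul_right (first_piece_le ν x _ (Real.exp_pos _) n) c
  have h2 : c * (∫⁻ t in Set.Ioo (Real.exp (-((n : ℝ) * δ ^ 2 / 2))) 1,
        ν (Metric.closedBall x (Real.sqrt (2 * (-Real.log t) / n))))
      ≤ ∫⁻ z, ENNReal.ofReal (Real.exp (-((n : ℝ) * (z - x) ^ 2 / 2))) ∂μ := by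
    have hmul : c * (∫⁻ t in Set.Ioo (Real.exp (-((n : ℝ) * δ ^ 2 / 2))) 1,
          ν (Metric.closedBall x (Real.sqrt (2 * (-Real.log t) / n))))
        = ∫⁻ t in Set.Ioo (Real.exp (-((n : ℝ) * δ ^ 2 / 2))) 1,
            c * ν (Metric.closedBall x (Real.sqrt (2 * (-Real.log t) / n))) :=
      (lintegral_const_mul' _ _ hc).symm
    have hstep : (∫⁻ t in Set.Ioo (Real.exp (-((n : ℝ) * δ ^ 2 / 2))) 1,
          c * ν (Metric.closedBall x (Real.sqrt (2 * (-Real.log t) / n))))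
        ≤ ∫⁻ t in Set.Ioo (Real.exp (-((n : ℝ) * δ ^ 2 / 2))) 1,
            μ (Metric.closedBall x (Real.sqrt (2 * (-Real.log t) / n))) := by
      apply lintegral_mono_ae
      rw [ae_restrict_iff' measurableSet_Ioo]
      refine Filter.Eventually.of_forall fun t ht => ?_
      obtain ⟨hr1, hr2⟩ := rad_pos_le hn hδ ht
      exact hcomp _ hr1 hr2
    have hsub : (∫⁻ t in Set.Ioo (Real.exp (-((n : ℝ) * δ ^ 2 / 2))) 1,
          μ (Metric.closedBall x (Real.sqrt (2 * (-Real.log t) / n))))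
        ≤ ∫⁻ z, ENNReal.ofReal (Real.exp (-((n : ℝ) * (z - x) ^ 2 / 2))) ∂μ := by
      rw [split_layer μ x δ hδ n hn]
      exact le_add_self
    exact hmul.le.trans (hstep.trans hsub)
  calc c * (∫⁻ z, ENNReal.ofReal (Real.exp (-((n : ℝ) * (z - x) ^ 2 / 2))) ∂ν)
      = c * (∫⁻ t in Set.Ioc (0:ℝ) (Real.exp (-((n : ℝ) * δ ^ 2 / 2))),
          ν (Metric.closedBall x (Real.sqrt (2 * (-Real.log t) / n))))
        + c * (∫⁻ t in Set.Ioo (Real.exp (-((n : ℝ) * δ ^ 2 / 2))) 1,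
          ν (Metric.closedBall x (Real.sqrt (2 * (-Real.log t) / n)))) := by
        rw [split_layer ν x δ hδ n hn, mul_add]
    _ ≤ c * (ν Set.univ * ENNReal.ofReal (Real.exp (-((n : ℝ) * δ ^ 2 / 2))))
        + ∫⁻ z, ENNReal.ofReal (Real.exp (-((n : ℝ) * (z - x) ^ 2 / 2))) ∂μ :=
      add_le_add h1 h2
    _ = _ := add_comm _ _

/-- for finite measures `μ`, `ν` on `ℝ` with `ν ≠ 0`, for `ν`-almost every
`x` the ratio of Gaussian posterior-normalization integrals
`(∫ exp(-n·(z-x)²/2) dμ(z)) / (∫ exp(-n·(z-x)²/2) dν(z))` converges, as `n → ∞`, to the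
Radon–Nikodym derivative at `x` of the absolutely continuous part of `μ` w.r.t. `ν`. -/
theorem gaussian_posterior_ratio_tendsto_rnDeriv
    (μ ν : Measure ℝ) [IsFiniteMeasure μ] [IsFiniteMeasure ν] (hν : ν ≠ 0) :
    ∀ᵐ x ∂ν, Tendsto
      (fun n : ℕ =>
        (∫ z, Real.exp (-((n : ℝ) * (z - x) ^ 2 / 2)) ∂μ) /
          (∫ z, Real.exp (-((n : ℝ) * (z - x) ^ 2 / 2)) ∂ν))
      atTop (nhds ((μ.rnDeriv ν x).toReal)) := by
  filter_upwards [Besicovitch.ae_tendsto_rnDeriv μ ν, μ.rnDeriv_lt_top ν,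
    ae_closedBall_pos ν] with x hx1 hx2 hx3
  have hLne : μ.rnDeriv ν x ≠ ∞ := hx2.ne
  set l : ℝ := (μ.rnDeriv ν x).toReal with hl
  set A : ℕ → ℝ≥0∞ :=
    fun n => ∫⁻ z, ENNReal.ofReal (Real.exp (-((n : ℝ) * (z - x) ^ 2 / 2))) ∂μ with hA
  set B : ℕ → ℝ≥0∞ :=
    fun n => ∫⁻ z, ENNReal.ofReal (Real.exp (-((n : ℝ) * (z - x) ^ 2 / 2))) ∂ν with hB
  -- conversion of Bochner integrals to lintegrals
  have hconv : ∀ (ρ : Measure ℝ) (n : ℕ),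
      ∫ z, Real.exp (-((n : ℝ) * (z - x) ^ 2 / 2)) ∂ρ
        = (∫⁻ z, ENNReal.ofReal (Real.exp (-((n : ℝ) * (z - x) ^ 2 / 2))) ∂ρ).toReal := by
    intro ρ n
    apply integral_eq_lintegral_of_nonneg_ae
    · exact Filter.Eventually.of_forall fun z => (Real.exp_pos _).le
    · exact (Real.continuous_exp.comp (by continuity)).aestronglyMeasurable
  -- basic bounds
  have hAle : ∀ n, A n ≤ μ Set.univ := by
    intro n
    calc A n ≤ ∫⁻ _, 1 ∂μ := by
          apply lintegral_mono fun z => ?_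
          rw [show (1 : ℝ≥0∞) = ENNReal.ofReal 1 by simp]
          apply ENNReal.ofReal_le_ofReal
          rw [Real.exp_le_one_iff]
          have : (0:ℝ) ≤ (n : ℝ) * (z - x) ^ 2 / 2 := by positivity
          linarith
      _ = μ Set.univ := lintegral_one
  have hBle : ∀ n, B n ≤ ν Set.univ := by
    intro n
    calc B n ≤ ∫⁻ _, 1 ∂ν := by
          apply lintegral_mono fun z => ?_
          rw [show (1 : ℝ≥0∞) = ENNReal.ofReal 1 by simp]
          apply ENNReal.ofReal_le_ofReal
          rw [Real.exp_le_one_iff]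
          have : (0:ℝ) ≤ (n : ℝ) * (z - x) ^ 2 / 2 := by positivity
          linarith
      _ = ν Set.univ := lintegral_one
  have hAne : ∀ n, A n ≠ ∞ := fun n => ((hAle n).trans_lt (measure_lt_top μ _)).ne
  have hBne : ∀ n, B n ≠ ∞ := fun n => ((hBle n).trans_lt (measure_lt_top ν _)).ne
  have hBlow : ∀ (n : ℕ) (r : ℝ), 0 < r →
      ENNReal.ofReal (Real.exp (-((n : ℝ) * r ^ 2 / 2))) * ν (Metric.closedBall x r)
        ≤ B n := by
    intro n r hr
    calc ENNReal.ofReal (Real.exp (-((n : ℝ) * r ^ 2 / 2))) * ν (Metric.closedBall x r)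
        = ∫⁻ _ in Metric.closedBall x r,
            ENNReal.ofReal (Real.exp (-((n : ℝ) * r ^ 2 / 2))) ∂ν :=
          (setLIntegral_const _ _).symm
      _ ≤ ∫⁻ z in Metric.closedBall x r,
            ENNReal.ofReal (Real.exp (-((n : ℝ) * (z - x) ^ 2 / 2))) ∂ν := by
          apply lintegral_mono_ae
          rw [ae_restrict_iff' measurableSet_closedBall]
          refine Filter.Eventually.of_forall fun z hz => ?_
          apply ENNReal.ofReal_le_ofReal
          apply Real.exp_le_exp.2
          have hzx : |z - x| ≤ r := by
            simpa [Real.dist_eq] using hz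
          have h2 : (z - x) ^ 2 ≤ r ^ 2 := by
            rw [← sq_abs]
            exact pow_le_pow_left₀ (abs_nonneg _) hzx 2
          have hn0 : (0:ℝ) ≤ (n : ℝ) := Nat.cast_nonneg n
          nlinarith
      _ ≤ B n := setLIntegral_le_lintegral _ _
  have hBpos : ∀ n, 0 < B n := by
    intro n
    refine lt_of_lt_of_le ?_ (hBlow n 1 one_pos)
    exact ENNReal.mul_pos (by simp [Real.exp_pos]) (hx3 1 one_pos).ne'
  have hbpos : ∀ n, 0 < (B n).toReal :=
    fun n => ENNReal.toReal_pos (hBpos n).ne' (hBne n)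
  -- the two master estimates
  have master_up : ∀ ε : ℝ, 0 < ε →
      ∀ᶠ n in atTop, (A n).toReal / (B n).toReal < l + 2 * ε := by
    intro ε hε
    have hεne : ENNReal.ofReal ε ≠ 0 := by
      simp [ENNReal.ofReal_eq_zero, not_le, hε]
    have hlt : μ.rnDeriv ν x < μ.rnDeriv ν x + ENNReal.ofReal ε :=
      ENNReal.lt_add_right hLne hεne
    have hev := hx1.eventually_lt_const hlt
    obtain ⟨δ, hδmem, hsub⟩ := mem_nhdsGT_iff_exists_Ioc_subset.1 hev
    have hδ : (0:ℝ) < δ := hδmem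
    have hcne : μ.rnDeriv ν x + ENNReal.ofReal ε ≠ ∞ :=
      ENNReal.add_ne_top.2 ⟨hLne, ENNReal.ofReal_ne_top⟩
    have hcomp : ∀ r : ℝ, 0 < r → r ≤ δ → μ (Metric.closedBall x r)
        ≤ (μ.rnDeriv ν x + ENNReal.ofReal ε) * ν (Metric.closedBall x r) := by
      intro r h1 h2
      have hmem : μ (Metric.closedBall x r) / ν (Metric.closedBall x r)
          < μ.rnDeriv ν x + ENNReal.ofReal ε := hsub ⟨h1, h2⟩
      have hν0 : ν (Metric.closedBall x r) ≠ 0 := (hx3 r h1).ne'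
      have hνt : ν (Metric.closedBall x r) ≠ ∞ := (measure_lt_top ν _).ne
      rw [ENNReal.div_lt_iff (Or.inl hν0) (Or.inl hνt)] at hmem
      exact hmem.le
    have hreal : ∀ n : ℕ, 1 ≤ n → (A n).toReal ≤ (l + ε) * (B n).toReal
        + (μ Set.univ).toReal * Real.exp (-((n : ℝ) * δ ^ 2 / 2)) := by
      intro n hn
      have h := upper_est μ ν x hδ hcne hcomp n hn
      have hfin : (μ.rnDeriv ν x + ENNReal.ofReal ε) * B n
          + μ Set.univ * ENNReal.ofReal (Real.exp (-((n : ℝ) * δ ^ 2 / 2))) ≠ ∞ :=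
        ENNReal.add_ne_top.2 ⟨ENNReal.mul_ne_top hcne (hBne n),
          ENNReal.mul_ne_top (measure_ne_top μ _) ENNReal.ofReal_ne_top⟩
      have h2 := ENNReal.toReal_mono hfin h
      rwa [ENNReal.toReal_add (ENNReal.mul_ne_top hcne (hBne n))
          (ENNReal.mul_ne_top (measure_ne_top μ _) ENNReal.ofReal_ne_top),
        ENNReal.toReal_mul, ENNReal.toReal_mul,
        ENNReal.toReal_ofReal (Real.exp_pos _).le,
        ENNReal.toReal_add hLne ENNReal.ofReal_ne_top,
        ENNReal.toReal_ofReal hε.le] at h2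
    set w : ℝ := (ν (Metric.closedBall x (δ / 2))).toReal with hw
    have hwpos : 0 < w :=
      ENNReal.toReal_pos (hx3 (δ / 2) (by linarith)).ne' (measure_ne_top ν _)
    have hblow : ∀ n : ℕ, Real.exp (-((n : ℝ) * (δ / 2) ^ 2 / 2)) * w ≤ (B n).toReal := by
      intro n
      have h := ENNReal.toReal_mono (hBne n) (hBlow n (δ / 2) (by linarith))
      rwa [ENNReal.toReal_mul, ENNReal.toReal_ofReal (Real.exp_pos _).le] at h
    have htail : Tendsto (fun n : ℕ =>
        (μ Set.univ).toReal * Real.exp (-(3 * δ ^ 2 / 8 * n))) atTop (𝓝 0) := by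
      have h1 : Tendsto (fun n : ℕ => 3 * δ ^ 2 / 8 * (n : ℝ)) atTop atTop :=
        Tendsto.const_mul_atTop (by positivity) tendsto_natCast_atTop_atTop
      have h2 := Real.tendsto_exp_neg_atTop_nhds_zero.comp h1
      have h3 := h2.const_mul (μ Set.univ).toReal
      simpa using h3
    have hevtail := htail.eventually_lt_const (show (0:ℝ) < ε * w by positivity)
    filter_upwards [eventually_ge_atTop 1, hevtail] with n hn1 hn2
    rw [div_lt_iff₀ (hbpos n)]
    have hsplitexp : Real.exp (-((n : ℝ) * δ ^ 2 / 2))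
        = Real.exp (-(3 * δ ^ 2 / 8 * n)) * Real.exp (-((n : ℝ) * (δ / 2) ^ 2 / 2)) := by
      rw [← Real.exp_add]
      congr 1
      ring
    have he2 : 0 < Real.exp (-((n : ℝ) * (δ / 2) ^ 2 / 2)) := Real.exp_pos _
    have hkey : (μ Set.univ).toReal * Real.exp (-((n : ℝ) * δ ^ 2 / 2))
        < ε * (B n).toReal := by
      rw [hsplitexp]
      have hb := hblow n
      nlinarith
    have h := hreal n hn1
    nlinarith

  have master_low : ∀ ε : ℝ, 0 < ε → ε < l →
      ∀ᶠ n in atTop, l - 2 * ε < (A n).toReal / (B n).toReal := by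
    intro ε hε hεl
    have hεne : ENNReal.ofReal ε ≠ 0 := by
      simp [ENNReal.ofReal_eq_zero, not_le, hε]
    have hεL : ENNReal.ofReal ε < μ.rnDeriv ν x :=
      (ENNReal.ofReal_lt_iff_lt_toReal hε.le hLne).2 hεl
    have hL0 : μ.rnDeriv ν x ≠ 0 := fun h => by simp [h] at hεL
    have hlt : μ.rnDeriv ν x - ENNReal.ofReal ε < μ.rnDeriv ν x :=
      ENNReal.sub_lt_self hLne hL0 hεne
    have hev := hx1.eventually_const_lt hlt
    obtain ⟨δ, hδmem, hsub⟩ := mem_nhdsGT_iff_exists_Ioc_subset.1 hev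
    have hδ : (0:ℝ) < δ := hδmem
    have hcne : μ.rnDeriv ν x - ENNReal.ofReal ε ≠ ∞ :=
      (le_trans tsub_le_self le_rfl).trans_lt hx2 |>.ne
    have hcomp : ∀ r : ℝ, 0 < r → r ≤ δ →
        (μ.rnDeriv ν x - ENNReal.ofReal ε) * ν (Metric.closedBall x r)
          ≤ μ (Metric.closedBall x r) := by
      intro r h1 h2
      have hmem : μ.rnDeriv ν x - ENNReal.ofReal ε
          < μ (Metric.closedBall x r) / ν (Metric.closedBall x r) := hsub ⟨h1, h2⟩
      have hν0 : ν (Metric.closedBall x r) ≠ 0 := (hx3 r h1).ne'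
      have hνt : ν (Metric.closedBall x r) ≠ ∞ := (measure_lt_top ν _).ne
      exact (ENNReal.le_div_iff_mul_le (Or.inl hν0) (Or.inl hνt)).1 hmem.le
    have hctr : (μ.rnDeriv ν x - ENNReal.ofReal ε).toReal = l - ε := by
      rw [ENNReal.toReal_sub_of_le hεL.le hLne, ENNReal.toReal_ofReal hε.le]
    have hreal : ∀ n : ℕ, 1 ≤ n → (l - ε) * (B n).toReal ≤ (A n).toReal
        + (l - ε) * ((ν Set.univ).toReal * Real.exp (-((n : ℝ) * δ ^ 2 / 2))) := by
      intro n hn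
      have h := lower_est μ ν x hδ hcne hcomp n hn
      have hfin : A n + (μ.rnDeriv ν x - ENNReal.ofReal ε)
          * (ν Set.univ * ENNReal.ofReal (Real.exp (-((n : ℝ) * δ ^ 2 / 2)))) ≠ ∞ :=
        ENNReal.add_ne_top.2 ⟨hAne n, ENNReal.mul_ne_top hcne
          (ENNReal.mul_ne_top (measure_ne_top ν _) ENNReal.ofReal_ne_top)⟩
      have h2 := ENNReal.toReal_mono hfin h
      rwa [ENNReal.toReal_mul, hctr,
        ENNReal.toReal_add (hAne n) (ENNReal.mul_ne_top hcne
          (ENNReal.mul_ne_top (measure_ne_top ν _) ENNReal.ofReal_ne_top)),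
        ENNReal.toReal_mul, hctr, ENNReal.toReal_mul,
        ENNReal.toReal_ofReal (Real.exp_pos _).le] at h2
    set w : ℝ := (ν (Metric.closedBall x (δ / 2))).toReal with hw
    have hwpos : 0 < w :=
      ENNReal.toReal_pos (hx3 (δ / 2) (by linarith)).ne' (measure_ne_top ν _)
    have hblow : ∀ n : ℕ, Real.exp (-((n : ℝ) * (δ / 2) ^ 2 / 2)) * w ≤ (B n).toReal := by
      intro n
      have h := ENNReal.toReal_mono (hBne n) (hBlow n (δ / 2) (by linarith))
      rwa [ENNReal.toReal_mul, ENNReal.toReal_ofReal (Real.exp_pos _).le] at h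
    have htail : Tendsto (fun n : ℕ =>
        (l - ε) * (ν Set.univ).toReal * Real.exp (-(3 * δ ^ 2 / 8 * n))) atTop (𝓝 0) := by
      have h1 : Tendsto (fun n : ℕ => 3 * δ ^ 2 / 8 * (n : ℝ)) atTop atTop :=
        Tendsto.const_mul_atTop (by positivity) tendsto_natCast_atTop_atTop
      have h2 := Real.tendsto_exp_neg_atTop_nhds_zero.comp h1
      have h3 := h2.const_mul ((l - ε) * (ν Set.univ).toReal)
      simpa using h3
    have hevtail := htail.eventually_lt_const (show (0:ℝ) < ε * w by positivity)
    filter_upwards [eventually_ge_atTop 1, hevtail] with n hn1 hn2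
    rw [lt_div_iff₀ (hbpos n)]
    have hsplitexp : Real.exp (-((n : ℝ) * δ ^ 2 / 2))
        = Real.exp (-(3 * δ ^ 2 / 8 * n)) * Real.exp (-((n : ℝ) * (δ / 2) ^ 2 / 2)) := by
      rw [← Real.exp_add]
      congr 1
      ring
    have he2 : 0 < Real.exp (-((n : ℝ) * (δ / 2) ^ 2 / 2)) := Real.exp_pos _
    have hkey : (l - ε) * ((ν Set.univ).toReal * Real.exp (-((n : ℝ) * δ ^ 2 / 2)))
        < ε * (B n).toReal := by
      rw [hsplitexp]
      have hb := hblow n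
      nlinarith
    have h := hreal n hn1
    nlinarith

  have hfun : (fun n : ℕ =>
      (∫ z, Real.exp (-((n : ℝ) * (z - x) ^ 2 / 2)) ∂μ) /
        (∫ z, Real.exp (-((n : ℝ) * (z - x) ^ 2 / 2)) ∂ν))
      = fun n => (A n).toReal / (B n).toReal := by
    funext n
    rw [hconv μ n, hconv ν n]
  rw [hfun]
  rw [tendsto_order]
  constructor
  · intro q hq
    rcases lt_or_ge q 0 with hq0 | hq0
    · exact Filter.Eventually.of_forall fun n =>
        lt_of_lt_of_le hq0 (div_nonneg ENNReal.toReal_nonneg ENNReal.toReal_nonneg)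
    · have hlpos : 0 < l := lt_of_le_of_lt hq0 hq
      have hε : 0 < (l - q) / 3 := by linarith
      have hεl : (l - q) / 3 < l := by linarith
      filter_upwards [master_low ((l - q) / 3) hε hεl] with n hn
      have : l - 2 * ((l - q) / 3) = (l + 2 * q) / 3 := by ring
      rw [this] at hn
      linarith
  · intro q hq
    have hε : 0 < (q - l) / 3 := by linarith
    filter_upwards [master_up ((q - l) / 3) hε] with n hn
    have : l + 2 * ((q - l) / 3) = (l + 2 * q) / 3 := by ring
    rw [this] at hn
    linarith
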